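/- For every integer κ ≥ 2, the solution space of the system of PDEs R_{x^κ}=0, R_{x²u} - ((κ-2)/3)Q_{x³}=0, R_{xu} - ((κ-1)/2)Q_{x²}=0, R_{u²} - κ Q_{xu}=0, Q_u=0 (for pairs of polynomial functions (Q,R) in two variables x, u over ℝ) is a vector space of dimension exactly κ + 4. -/

import Mathlib

open MvPolynomial

/-- partial derivative with respect to `x` (variable `0`). -/
noncomputable def dX : MvPolynomial (Fin 2) ℝ → MvPolynomial (Fin 2) ℝ :=
  fun p => MvPolynomial.pderiv (0 : Fin 2) p

/-- partial derivative with respect to `u` (variable `1`). -/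
noncomputable def dU : MvPolynomial (Fin 2) ℝ → MvPolynomial (Fin 2) ℝ :=
  fun p => MvPolynomial.pderiv (1 : Fin 2) p

abbrev PP := MvPolynomial (Fin 2) ℝ

lemma coeff_pderiv (i : Fin 2) (p : PP) (m : Fin 2 →₀ ℕ) :
    coeff m (pderiv i p) = ((m i : ℝ) + 1) * coeff (m + Finsupp.single i 1) p := by
  induction p using MvPolynomial.induction_on' with
  | monomial s a =>
    rw [pderiv_monomial, coeff_monomial, coeff_monomial]
    rcases Nat.eq_zero_or_pos (s i) with h | h
    · have hne : s ≠ m + Finsupp.single i 1 := by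
        intro h'
        have := DFunLike.congr_fun h' i
        simp [Finsupp.add_apply, Finsupp.single_apply, h] at this
      rw [if_neg hne]
      split <;> simp [h]
    · have hle : Finsupp.single i 1 ≤ s := Finsupp.single_le_iff.mpr h
      have hiff : s - Finsupp.single i 1 = m ↔ s = m + Finsupp.single i 1 := by
        constructor
        · intro h'; rw [← h', tsub_add_cancel_of_le hle]
        · intro h'; rw [h', add_tsub_cancel_right]
      by_cases hc : s = m + Finsupp.single i 1
      · rw [if_pos (hiff.mpr hc), if_pos hc]
        subst hc
        simp [Finsupp.add_apply, Finsupp.single_apply]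
        ring
      · rw [if_neg (fun h' => hc (hiff.mp h')), if_neg hc, mul_zero]
  | add p q hp hq =>
    simp [coeff_add, hp, hq, mul_add]

lemma coeff_dX (p : PP) (m : Fin 2 →₀ ℕ) :
    coeff m (dX p) = ((m 0 : ℝ) + 1) * coeff (m + Finsupp.single 0 1) p :=
  coeff_pderiv 0 p m

lemma coeff_dU (p : PP) (m : Fin 2 →₀ ℕ) :
    coeff m (dU p) = ((m 1 : ℝ) + 1) * coeff (m + Finsupp.single 1 1) p :=
  coeff_pderiv 1 p m

lemma dU_dX_comm (p : PP) : dU (dX p) = dX (dU p) := by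
  apply MvPolynomial.ext
  intro m
  rw [coeff_dU, coeff_dX, coeff_dX, coeff_dU]
  rw [add_right_comm m (Finsupp.single 1 1) (Finsupp.single 0 1)]
  simp [Finsupp.add_apply, Finsupp.single_apply]
  ring

@[simp] lemma dX_zero : dX (0 : PP) = 0 := map_zero (pderiv 0)
@[simp] lemma dU_zero : dU (0 : PP) = 0 := map_zero (pderiv 1)

/-- if all coefficients with `n ≤ m 0` vanish, then the `n`-th `x`-derivative is zero -/
lemma dX_iter_eq_zero {p : PP} {n : ℕ}
    (h : ∀ m : Fin 2 →₀ ℕ, n ≤ m 0 → coeff m p = 0) : dX^[n] p = 0 := by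
  induction n generalizing p with
  | zero =>
    simpa using MvPolynomial.ext _ _ (fun m => by rw [h m (Nat.zero_le _), coeff_zero])
  | succ n ih =>
    rw [Function.iterate_succ_apply]
    apply ih
    intro m hm
    rw [coeff_dX, h, mul_zero]
    simp [Finsupp.add_apply, Finsupp.single_apply]
    omega

lemma coeff_eq_zero_of_dX_iter' {p : PP} {n : ℕ} (h : dX^[n] p = 0) (m : Fin 2 →₀ ℕ) :
    coeff (m + Finsupp.single 0 n) p = 0 := by
  induction n generalizing p m with
  | zero => simpa using congrArg (coeff m) h
  | succ n ih =>
    rw [Function.iterate_succ_apply] at h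
    have h2 := ih (p := dX p) h m
    rw [coeff_dX] at h2
    have hne : ((((m + Finsupp.single (0:Fin 2) n) 0 : ℕ) : ℝ) + 1) ≠ 0 := by positivity
    have := (mul_eq_zero.mp h2).resolve_left hne
    rw [show Finsupp.single (0 : Fin 2) (n+1) = Finsupp.single 0 n + Finsupp.single 0 1 by
      rw [← Finsupp.single_add], ← add_assoc]
    exact this

lemma coeff_eq_zero_of_dX_iter {p : PP} {n : ℕ} (h : dX^[n] p = 0) {m : Fin 2 →₀ ℕ}
    (hm : n ≤ m 0) : coeff m p = 0 := by
  have hle : Finsupp.single (0 : Fin 2) n ≤ m := Finsupp.single_le_iff.mpr hm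
  have := coeff_eq_zero_of_dX_iter' h (m - Finsupp.single 0 n)
  rwa [tsub_add_cancel_of_le hle] at this

lemma coeff_eq_zero_of_dU {p : PP} (h : dU p = 0) {m : Fin 2 →₀ ℕ}
    (hm : 1 ≤ m 1) : coeff m p = 0 := by
  have hle : Finsupp.single (1 : Fin 2) 1 ≤ m := Finsupp.single_le_iff.mpr hm
  have h2 := congrArg (coeff (m - Finsupp.single 1 1)) h
  rw [coeff_dU, coeff_zero, tsub_add_cancel_of_le hle] at h2
  have hne : ((((m - Finsupp.single 1 1 : Fin 2 →₀ ℕ) 1 : ℕ) : ℝ) + 1) ≠ 0 := by positivity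
  exact (mul_eq_zero.mp h2).resolve_left hne

lemma coeff_eq_zero_of_dU2 {p : PP} (h : dU (dU p) = 0) {m : Fin 2 →₀ ℕ}
    (hm : 2 ≤ m 1) : coeff m p = 0 := by
  have hle : Finsupp.single (1 : Fin 2) 1 ≤ m := Finsupp.single_le_iff.mpr (by omega)
  have h2 : coeff (m - Finsupp.single 1 1) (dU p) = 0 := by
    apply coeff_eq_zero_of_dU h
    simp [Finsupp.tsub_apply, Finsupp.single_apply]
    omega
  rw [coeff_dU, tsub_add_cancel_of_le hle] at h2
  have hne : ((((m - Finsupp.single 1 1 : Fin 2 →₀ ℕ) 1 : ℕ) : ℝ) + 1) ≠ 0 := by positivity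
  exact (mul_eq_zero.mp h2).resolve_left hne

lemma fin2_eq_single_add (m : Fin 2 →₀ ℕ) :
    m = Finsupp.single 0 (m 0) + Finsupp.single 1 (m 1) := by
  ext j
  fin_cases j <;> simp [Finsupp.add_apply, Finsupp.single_apply]

noncomputable def fX : PP →ₗ[ℝ] PP := (pderiv (0 : Fin 2)).toLinearMap
noncomputable def fU : PP →ₗ[ℝ] PP := (pderiv (1 : Fin 2)).toLinearMap

noncomputable def Lmap (κ : ℕ) : PP × PP →ₗ[ℝ] (PP × PP × PP × PP × PP) :=
  ((fX ^ κ).comp (LinearMap.snd ℝ PP PP)).prod <|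
  (((fU ∘ₗ fX ∘ₗ fX).comp (LinearMap.snd ℝ PP PP))
    - (((κ : ℝ) - 2)/3) • ((fX ∘ₗ fX ∘ₗ fX).comp (LinearMap.fst ℝ PP PP))).prod <|
  (((fU ∘ₗ fX).comp (LinearMap.snd ℝ PP PP))
    - (((κ : ℝ) - 1)/2) • ((fX ∘ₗ fX).comp (LinearMap.fst ℝ PP PP))).prod <|
  (((fU ∘ₗ fU).comp (LinearMap.snd ℝ PP PP))
    - (κ : ℝ) • ((fU ∘ₗ fX).comp (LinearMap.fst ℝ PP PP))).prod <|
  (fU.comp (LinearMap.fst ℝ PP PP))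

lemma fX_coe : ⇑fX = dX := rfl
lemma fU_coe : ⇑fU = dU := rfl

lemma Lmap_eq_zero_iff (κ : ℕ) (p : PP × PP) :
    Lmap κ p = 0 ↔
      (dX^[κ] p.2 = 0 ∧
        dU (dX (dX p.2)) - MvPolynomial.C (((κ : ℝ) - 2) / 3) * dX (dX (dX p.1)) = 0 ∧
        dU (dX p.2) - MvPolynomial.C (((κ : ℝ) - 1) / 2) * dX (dX p.1) = 0 ∧
        dU (dU p.2) - MvPolynomial.C (κ : ℝ) * dU (dX p.1) = 0 ∧
        dU p.1 = 0) := by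
  simp only [Lmap, LinearMap.prod_apply, Function.prod, Prod.mk_eq_zero, LinearMap.sub_apply,
    LinearMap.comp_apply, LinearMap.smul_apply, LinearMap.fst_apply, LinearMap.snd_apply,
    Module.End.pow_apply, fX_coe, fU_coe, smul_eq_C_mul]

noncomputable def vfam (κ : ℕ) : Fin 4 ⊕ Fin κ → PP × PP
  | .inl ⟨0, _⟩ => (1, 0)
  | .inl ⟨1, _⟩ => (X 0, 0)
  | .inl ⟨2, _⟩ => (X 0 ^ 2, C ((κ : ℝ) - 1) * (X 0 * X 1))
  | .inl ⟨3, _⟩ => (0, X 1)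
  | .inl ⟨n+4, h⟩ => absurd h (by omega)
  | .inr i => (0, X 0 ^ (i : ℕ))


noncomputable def cfam (κ : ℕ) : Fin 4 ⊕ Fin κ → ((PP × PP) →ₗ[ℝ] ℝ)
  | .inl ⟨0, _⟩ => (lcoeff ℝ 0).comp (LinearMap.fst ℝ PP PP)
  | .inl ⟨1, _⟩ => (lcoeff ℝ (Finsupp.single 0 1)).comp (LinearMap.fst ℝ PP PP)
  | .inl ⟨2, _⟩ => (lcoeff ℝ (Finsupp.single 0 2)).comp (LinearMap.fst ℝ PP PP)
  | .inl ⟨3, _⟩ => (lcoeff ℝ (Finsupp.single 1 1)).comp (LinearMap.snd ℝ PP PP)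
  | .inl ⟨n+4, h⟩ => absurd h (by omega)
  | .inr i => (lcoeff ℝ (Finsupp.single 0 (i : ℕ))).comp (LinearMap.snd ℝ PP PP)

noncomputable def phimap (κ : ℕ) : (PP × PP) →ₗ[ℝ] (Fin 4 ⊕ Fin κ → ℝ) :=
  LinearMap.pi (cfam κ)

lemma X0_mul_X1 : (X 0 * X 1 : PP) = monomial (Finsupp.single 0 1 + Finsupp.single 1 1) 1 := by
  rw [show (X (0 : Fin 2) : PP) = monomial (Finsupp.single 0 1) 1 from
      ((pow_one (X 0 : PP)).symm.trans X_pow_eq_monomial),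
    show (X (1 : Fin 2) : PP) = monomial (Finsupp.single 1 1) 1 from
      ((pow_one (X 1 : PP)).symm.trans X_pow_eq_monomial),
    monomial_mul, one_mul]


lemma sum11_ne_single11 :
    Finsupp.single (0:Fin 2) 1 + Finsupp.single 1 1 ≠ Finsupp.single 1 1 := by
  intro h; have := DFunLike.congr_fun h 0; simp at this

lemma sum11_ne_single0 (k : ℕ) :
    Finsupp.single (0:Fin 2) 1 + Finsupp.single 1 1 ≠ Finsupp.single 0 k := by
  intro h; have := DFunLike.congr_fun h 1; simp at this

lemma coeff_CX0X1 (e : ℝ) (m : Fin 2 →₀ ℕ) :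
    coeff m (C e * (X 0 * X 1) : PP) =
      if Finsupp.single 0 1 + Finsupp.single 1 1 = m then e else 0 := by
  rw [X0_mul_X1, C_mul_monomial, mul_one, coeff_monomial]


@[simp] lemma zero_eq_single_iff {i : Fin 2} {k : ℕ} :
    ((0 : Fin 2 →₀ ℕ) = Finsupp.single i k) ↔ k = 0 := by
  rw [eq_comm, Finsupp.single_eq_zero]

lemma coeff_natsub_X0X1 (n : ℕ) (m : Fin 2 →₀ ℕ) :
    coeff m (((n : PP) - 1) * (X 0 * X 1)) =
      if Finsupp.single 0 1 + Finsupp.single 1 1 = m then ((n:ℝ)-1) else 0 := by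
  rw [show ((n : PP) - 1) = C ((n:ℝ) - 1) by rw [map_sub, map_one, map_natCast]]
  exact coeff_CX0X1 _ _

lemma ite_or_helper (a b : ℕ) :
    (if a = b ∨ a = 0 ∧ b = 0 then (1:ℝ) else 0) = if b = a then 1 else 0 := by
  split_ifs <;> first | rfl | omega

lemma phi_vfam (κ : ℕ) (j : Fin 4 ⊕ Fin κ) :
    phimap κ (vfam κ j) = Pi.single j 1 := by
  funext j'
  rw [phimap, LinearMap.pi_apply, Pi.single_apply]
  obtain ⟨a, ha⟩ | ⟨a, ha⟩ := j <;> obtain ⟨b, hb⟩ | ⟨b, hb⟩ := j' <;>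
    [skip; skip; skip; skip] <;>
  · first
    | (interval_cases a <;> interval_cases b <;>
        simp +decide [cfam, vfam, coeff_C, coeff_one, coeff_X', coeff_X_pow, coeff_CX0X1, coeff_natsub_X0X1,
          sum11_ne_single11, sum11_ne_single0, ite_or_helper,
          coeff_monomial, Finsupp.single_eq_single_iff, Finsupp.single_eq_zero,
          Sum.inl.injEq, Sum.inr.injEq, Fin.ext_iff])
    | (interval_cases a <;>
        simp +decide [cfam, vfam, coeff_C, coeff_one, coeff_X', coeff_X_pow, coeff_CX0X1, coeff_natsub_X0X1,
          sum11_ne_single11, sum11_ne_single0, ite_or_helper,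
          coeff_monomial, Finsupp.single_eq_single_iff, Finsupp.single_eq_zero,
          Sum.inl.injEq, Sum.inr.injEq, Fin.ext_iff])
    | (interval_cases b <;>
        simp +decide [cfam, vfam, coeff_C, coeff_one, coeff_X', coeff_X_pow, coeff_CX0X1, coeff_natsub_X0X1,
          sum11_ne_single11, sum11_ne_single0, ite_or_helper,
          coeff_monomial, Finsupp.single_eq_single_iff, Finsupp.single_eq_zero,
          Sum.inl.injEq, Sum.inr.injEq, Fin.ext_iff])
    | (simp +decide [cfam, vfam, coeff_C, coeff_one, coeff_X', coeff_X_pow, coeff_CX0X1, coeff_natsub_X0X1,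
          sum11_ne_single11, sum11_ne_single0, ite_or_helper,
          coeff_monomial, Finsupp.single_eq_single_iff, Finsupp.single_eq_zero,
          Sum.inl.injEq, Sum.inr.injEq, Fin.ext_iff])

lemma vfam_indep (κ : ℕ) : LinearIndependent ℝ (vfam κ) := by
  apply LinearIndependent.of_comp (phimap κ)
  have h1 : (phimap κ) ∘ (vfam κ) = fun j => Pi.single j 1 := funext (phi_vfam κ)
  have h2 : ⇑(Pi.basisFun ℝ (Fin 4 ⊕ Fin κ)) = fun j => Pi.single j 1 :=
    funext fun j => Pi.basisFun_apply ℝ _ j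
  rw [h1, ← h2]
  exact (Pi.basisFun ℝ (Fin 4 ⊕ Fin κ)).linearIndependent


def onlyX (p : PP) : Prop := ∀ m : Fin 2 →₀ ℕ, m 1 ≠ 0 → coeff m p = 0

lemma onlyX.dX {p : PP} (h : onlyX p) : onlyX (dX p) := by
  intro m hm
  rw [coeff_dX, h, mul_zero]
  simpa using hm

lemma onlyX.dU_eq_zero {p : PP} (h : onlyX p) : dU p = 0 := by
  apply MvPolynomial.ext
  intro m
  rw [coeff_dU, coeff_zero, h, mul_zero]
  simp

lemma onlyX_X0pow (n : ℕ) : onlyX ((X 0 : PP) ^ n) := by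
  intro m hm
  rw [coeff_X_pow, if_neg]
  intro h
  rw [← h] at hm
  simp at hm

@[simp] lemma dX_X0 : dX (X 0 : PP) = 1 := by rw [dX]; exact pderiv_X_self _
@[simp] lemma dU_X0 : dU (X 0 : PP) = 0 := by rw [dU]; exact pderiv_X_of_ne (by decide)
@[simp] lemma dX_X1 : dX (X 1 : PP) = 0 := by rw [dX]; exact pderiv_X_of_ne (by decide)
@[simp] lemma dU_X1 : dU (X 1 : PP) = 1 := by rw [dU]; exact pderiv_X_self _
@[simp] lemma dX_C (e : ℝ) : dX (C e : PP) = 0 := by rw [dX]; exact pderiv_C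
@[simp] lemma dU_C (e : ℝ) : dU (C e : PP) = 0 := by rw [dU]; exact pderiv_C

@[simp] lemma dX_one : dX (1 : PP) = 0 := by
  rw [← C_1]; exact dX_C 1

@[simp] lemma dU_one : dU (1 : PP) = 0 := by
  rw [← C_1]; exact dU_C 1

lemma dX_C_mul (e : ℝ) (p : PP) : dX (C e * p) = C e * dX p := by rw [dX, dX]; exact pderiv_C_mul
lemma dU_C_mul (e : ℝ) (p : PP) : dU (C e * p) = C e * dU p := by rw [dU, dU]; exact pderiv_C_mul

lemma dX_X0_pow (n : ℕ) : dX ((X 0 : PP) ^ (n+1)) = C ((n:ℝ)+1) * X 0 ^ n := by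
  rw [dX, pderiv_pow, pderiv_X_self, mul_one, Nat.add_sub_cancel, map_add, map_one, map_natCast]
  push_cast
  ring

lemma dX_X0sq : dX ((X 0 : PP) ^ 2) = C 2 * X 0 := by
  have h := dX_X0_pow 1
  rw [pow_one] at h
  rw [h]
  norm_num

@[simp] lemma dX_X0X1 : dX ((X 0 : PP) * X 1) = X 1 := by
  rw [dX, pderiv_mul, pderiv_X_self, pderiv_X_of_ne (by decide)]
  simp

@[simp] lemma dU_X0X1 : dU ((X 0 : PP) * X 1) = X 0 := by
  rw [dU, pderiv_mul, pderiv_X_self, pderiv_X_of_ne (by decide)]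
  simp

@[simp] lemma dU_X0_pow (n : ℕ) : dU ((X 0 : PP) ^ n) = 0 := (onlyX_X0pow n).dU_eq_zero

lemma dXiter_zero (n : ℕ) : dX^[n] (0 : PP) = 0 := Function.iterate_fixed dX_zero n

lemma dXiter_CX0X1 {κ : ℕ} (hκ : 2 ≤ κ) (e : ℝ) : dX^[κ] (C e * (X 0 * X 1) : PP) = 0 := by
  apply dX_iter_eq_zero
  intro m hm
  rw [coeff_CX0X1, if_neg, ]
  intro h
  have := DFunLike.congr_fun h 0
  simp at this
  omega

lemma dXiter_X1 {κ : ℕ} (hκ : 2 ≤ κ) : dX^[κ] (X 1 : PP) = 0 := by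
  apply dX_iter_eq_zero
  intro m hm
  rw [coeff_X', if_neg]
  intro h
  have := DFunLike.congr_fun h 0
  simp at this
  omega

lemma dXiter_X0pow {κ b : ℕ} (hb : b < κ) : dX^[κ] ((X 0 : PP) ^ b) = 0 := by
  apply dX_iter_eq_zero
  intro m hm
  rw [coeff_X_pow, if_neg]
  intro h
  have := DFunLike.congr_fun h 0
  simp at this
  omega


lemma dX_add (p q : PP) : dX (p + q) = dX p + dX q := map_add (pderiv (0 : Fin 2)) p q
lemma dU_add (p q : PP) : dU (p + q) = dU p + dU q := map_add (pderiv (1 : Fin 2)) p q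
lemma dX_sub (p q : PP) : dX (p - q) = dX p - dX q := map_sub (pderiv (0 : Fin 2)).toLinearMap p q
lemma dU_sub (p q : PP) : dU (p - q) = dU p - dU q := map_sub (pderiv (1 : Fin 2)).toLinearMap p q

lemma single_add_comm3 (j : ℕ) :
    Finsupp.single (0 : Fin 2) j + Finsupp.single 1 1 + Finsupp.single 0 1
      = Finsupp.single 0 (j+1) + Finsupp.single 1 1 := by
  rw [add_right_comm, ← Finsupp.single_add]

theorem stmt1 (κ : ℕ) (hκ : 2 ≤ κ) :
    ∃ S : Submodule ℝ (MvPolynomial (Fin 2) ℝ × MvPolynomial (Fin 2) ℝ),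
      (S : Set (MvPolynomial (Fin 2) ℝ × MvPolynomial (Fin 2) ℝ)) =
        {p | dX^[κ] p.2 = 0 ∧
             dU (dX (dX p.2)) - MvPolynomial.C (((κ : ℝ) - 2) / 3) * dX (dX (dX p.1)) = 0 ∧
             dU (dX p.2) - MvPolynomial.C (((κ : ℝ) - 1) / 2) * dX (dX p.1) = 0 ∧
             dU (dU p.2) - MvPolynomial.C (κ : ℝ) * dU (dX p.1) = 0 ∧
             dU p.1 = 0} ∧
      Module.finrank ℝ S = κ + 4 := by
  refine ⟨LinearMap.ker (Lmap κ), ?_, ?_⟩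
  · ext p
    simp only [SetLike.mem_coe, LinearMap.mem_ker, Lmap_eq_zero_iff, Set.mem_setOf_eq]
  · have hspan : LinearMap.ker (Lmap κ) = Submodule.span ℝ (Set.range (vfam κ)) := by
      apply le_antisymm
      · rintro ⟨Q, R⟩ hp
        rw [LinearMap.mem_ker, Lmap_eq_zero_iff] at hp
        obtain ⟨h1, h2, h3, h4, h5⟩ := hp
        dsimp only at h1 h2 h3 h4 h5
        have hRuu : dU (dU R) = 0 := by
          have hx : dU (dX Q) = 0 := by rw [dU_dX_comm, h5, dX_zero]
          rw [hx, mul_zero, sub_zero] at h4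
          exact h4
        have hQ3 : dX (dX (dX Q)) = 0 := by
          have e3 := congrArg dX h3
          rw [dX_sub, dX_C_mul, dX_zero, ← dU_dX_comm, sub_eq_zero] at e3
          rw [sub_eq_zero] at h2
          have hzero : (C (((κ:ℝ)-1)/2) - C (((κ:ℝ)-2)/3)) * dX (dX (dX Q)) = 0 := by
            rw [sub_mul, ← e3, ← h2, sub_self]
          rw [← map_sub] at hzero
          have hc : (((κ:ℝ)-1)/2 - ((κ:ℝ)-2)/3) ≠ 0 := by
            have hval : ((κ:ℝ)-1)/2 - ((κ:ℝ)-2)/3 = ((κ:ℝ)+1)/6 := by ring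
            rw [hval]
            positivity
          have h' : C ((((κ:ℝ)-1)/2 - ((κ:ℝ)-2)/3)⁻¹)
              * (C (((κ:ℝ)-1)/2 - ((κ:ℝ)-2)/3) * dX (dX (dX Q))) = 0 := by
            rw [hzero, mul_zero]
          rwa [← mul_assoc, ← map_mul, inv_mul_cancel₀ hc, map_one, one_mul] at h'
        have hQu : ∀ m : Fin 2 →₀ ℕ, m 1 ≠ 0 → coeff m Q = 0 := fun m hm =>
          coeff_eq_zero_of_dU h5 (by omega)
        have hQ3c : ∀ m : Fin 2 →₀ ℕ, 3 ≤ m 0 → coeff m Q = 0 := fun m hm =>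
          coeff_eq_zero_of_dX_iter (n := 3) hQ3 hm
        have hR2 : ∀ m : Fin 2 →₀ ℕ, 2 ≤ m 1 → coeff m R = 0 := fun m hm =>
          coeff_eq_zero_of_dU2 hRuu hm
        have hRκ : ∀ m : Fin 2 →₀ ℕ, κ ≤ m 0 → coeff m R = 0 := fun m hm =>
          coeff_eq_zero_of_dX_iter h1 hm
        -- structure of Q
        have hQ : Q = C (coeff 0 Q) + C (coeff (Finsupp.single 0 1) Q) * X 0
            + C (coeff (Finsupp.single 0 2) Q) * X 0 ^ 2 := by
          apply MvPolynomial.ext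
          intro m
          rw [coeff_add, coeff_add, coeff_C, coeff_C_mul, coeff_X', coeff_C_mul, coeff_X_pow]
          by_cases hm1 : m 1 = 0
          · have hm : m = Finsupp.single 0 (m 0) := by
              conv_lhs => rw [fin2_eq_single_add m]
              rw [hm1, Finsupp.single_zero, add_zero]
            rcases hk : m 0 with _ | _ | _ | n
            · rw [hk, Finsupp.single_zero] at hm
              rw [hm]
              simp
            · rw [hk] at hm
              rw [hm]
              simp +decide [Finsupp.single_eq_single_iff]
            · rw [hk] at hm
              rw [hm]
              simp +decide [Finsupp.single_eq_single_iff]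
            · rw [hk] at hm
              rw [hm, hQ3c _ (by simp)]
              rw [if_neg (fun h => by have := DFunLike.congr_fun h 0; simp at this),
                if_neg (fun h => by have := DFunLike.congr_fun h 0; simp at this <;> omega),
                if_neg (fun h => by have := DFunLike.congr_fun h 0; simp at this <;> omega)]
              simp
          · rw [hQu m hm1]
            rw [if_neg (fun h => hm1 (by rw [← h]; simp)),
              if_neg (fun h => hm1 (by rw [← h]; simp [Finsupp.single_apply])),
              if_neg (fun h => hm1 (by rw [← h]; simp [Finsupp.single_apply]))]
            simp
        -- the u-linear part of R
        have hdXXQ : dX (dX Q) = C (coeff (Finsupp.single 0 2) Q * 2) := by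
          conv_lhs => rw [hQ]
          simp only [dX_add, dX_C, dX_C_mul, dX_X0, dX_X0sq, dX_zero, dX_one,
            mul_zero, mul_one, zero_add, add_zero, ← map_mul]
        rw [sub_eq_zero] at h3
        have h3' : dU (dX R) = C (((κ:ℝ)-1) * coeff (Finsupp.single 0 2) Q) := by
          rw [h3, hdXXQ, ← map_mul]
          congr 1
          ring
        have hRj : ∀ j : ℕ, ((j:ℝ) + 1) * coeff (Finsupp.single 0 (j+1) + Finsupp.single 1 1) R
            = (if j = 0 then ((κ:ℝ)-1) * coeff (Finsupp.single 0 2) Q else 0) := by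
          intro j
          have hkey := congrArg (coeff (Finsupp.single 0 j)) h3'
          rw [coeff_dU, coeff_dX, coeff_C, single_add_comm3] at hkey
          simpa [Finsupp.single_apply, Finsupp.add_apply] using hkey
        have hRe : coeff (Finsupp.single 0 1 + Finsupp.single 1 1) R
            = ((κ:ℝ)-1) * coeff (Finsupp.single 0 2) Q := by
          have := hRj 0
          simpa using this
        have hR1z : ∀ j : ℕ, coeff (Finsupp.single 0 (j+2) + Finsupp.single 1 1) R = 0 := by
          intro j
          have h := hRj (j+1)
          rw [if_neg (by omega)] at h
          have hne : (((j+1:ℕ)):ℝ) + 1 ≠ 0 := by positivity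
          exact (mul_eq_zero.mp h).resolve_left hne
        set e : ℝ := ((κ:ℝ)-1) * coeff (Finsupp.single 0 2) Q with he
        set d : ℝ := coeff (Finsupp.single 1 1) R with hd
        set A : PP := R - C d * X 1 - C e * (X 0 * X 1) with hA
        have hA0 : ∀ m : Fin 2 →₀ ℕ, (m 1 ≠ 0 ∨ κ ≤ m 0) → coeff m A = 0 := by
          intro m hm
          rw [hA, coeff_sub, coeff_sub, coeff_C_mul, coeff_X', coeff_CX0X1]
          by_cases hm1 : m 1 = 0
          · have hm0 : κ ≤ m 0 := hm.resolve_left (by simp [hm1])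
            rw [hRκ m hm0, if_neg (fun h => by rw [← h] at hm1; simp at hm1),
              if_neg (fun h => by rw [← h] at hm1; simp [Finsupp.add_apply] at hm1)]
            simp
          · rcases Nat.lt_or_ge (m 1) 2 with hlt | hge
            · have hm1' : m 1 = 1 := by omega
              have hmr : m = Finsupp.single 0 (m 0) + Finsupp.single 1 1 := by
                conv_lhs => rw [fin2_eq_single_add m]
                rw [hm1']
              rcases hk : m 0 with _ | _ | n
              · rw [hk, Finsupp.single_zero, zero_add] at hmr
                rw [hmr, if_pos rfl,
                  if_neg (fun h => by have := DFunLike.congr_fun h 0; simp at this)]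
                simp [← hd]
              · rw [hk] at hmr
                rw [hmr, hRe,
                  if_neg (fun h => by have := DFunLike.congr_fun h 0; simp at this),
                  if_pos rfl]
                simp [← he]
              · rw [hk] at hmr
                rw [hmr, hR1z n,
                  if_neg (fun h => by have := DFunLike.congr_fun h 0; simp at this),
                  if_neg (fun h => by have := DFunLike.congr_fun h 0; simp at this)]
                simp
            · rw [hR2 m hge,
                if_neg (fun h => by rw [← h] at hge; simp at hge),
                if_neg (fun h => by rw [← h] at hge; simp [Finsupp.add_apply] at hge)]
              simp
        have hAsupp : ∀ m ∈ A.support, m 1 = 0 ∧ m 0 < κ := by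
          intro m hm
          rw [MvPolynomial.mem_support_iff] at hm
          by_contra hcon
          push_neg at hcon
          rcases Nat.eq_zero_or_pos (m 1) with h0 | h0
          · exact hm (hA0 m (Or.inr (hcon h0)))
          · exact hm (hA0 m (Or.inl (by omega)))
        have hAmem : ((0 : PP), A) ∈ Submodule.span ℝ (Set.range (vfam κ)) := by
          have h2' : ∀ m ∈ A.support,
              coeff m A • ((0:PP), (X 0:PP) ^ (m 0)) = ((0:PP), monomial m (coeff m A)) := by
            intro m hm
            obtain ⟨hm1, hm0⟩ := hAsupp m hm
            have hms : m = Finsupp.single 0 (m 0) := by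
              conv_lhs => rw [fin2_eq_single_add m]
              rw [hm1, Finsupp.single_zero, add_zero]
            rw [Prod.smul_mk, smul_zero]
            congr 1
            rw [X_pow_eq_monomial, smul_monomial, smul_eq_mul, mul_one, ← hms]
          have hrepr : ((0 : PP), A) = ∑ m ∈ A.support, coeff m A • ((0:PP), (X 0:PP) ^ (m 0)) := by
            rw [Finset.sum_congr rfl h2']
            refine Prod.ext ?_ ?_
            · rw [Prod.fst_sum]
              simp
            · rw [Prod.snd_sum]
              simpa using (support_sum_monomial_coeff A).symm
          rw [hrepr]
          exact Submodule.sum_mem _ (fun m hm => Submodule.smul_mem _ _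
            (Submodule.subset_span ⟨Sum.inr ⟨m 0, (hAsupp m hm).2⟩, rfl⟩))
        have hce : (C e : PP) = C ((κ:ℝ)-1) * C (coeff (Finsupp.single 0 2) Q) := by
          rw [he, map_mul]
        have hsum : ((Q, R) : PP × PP) =
            coeff 0 Q • vfam κ (Sum.inl ⟨0, by omega⟩)
            + coeff (Finsupp.single 0 1) Q • vfam κ (Sum.inl ⟨1, by omega⟩)
            + coeff (Finsupp.single 0 2) Q • vfam κ (Sum.inl ⟨2, by omega⟩)
            + d • vfam κ (Sum.inl ⟨3, by omega⟩)
            + ((0 : PP), A) := by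
          simp only [vfam]
          refine Prod.ext ?_ ?_
          · simp only [Prod.smul_mk, Prod.fst_add, smul_zero, add_zero, zero_add,
              smul_eq_C_mul, mul_one]
            linear_combination hQ
          · simp only [Prod.smul_mk, Prod.snd_add, smul_zero, add_zero, zero_add,
              smul_eq_C_mul, hA]
            linear_combination (X 0 * X 1) * hce
        rw [show ((Q, R) : PP × PP) = (Q, R) from rfl, hsum]
        refine add_mem (add_mem (add_mem (add_mem
          (Submodule.smul_mem _ _ (Submodule.subset_span ⟨_, rfl⟩))
          (Submodule.smul_mem _ _ (Submodule.subset_span ⟨_, rfl⟩)))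
          (Submodule.smul_mem _ _ (Submodule.subset_span ⟨_, rfl⟩)))
          (Submodule.smul_mem _ _ (Submodule.subset_span ⟨_, rfl⟩)))
          hAmem
      · rw [Submodule.span_le]
        rintro _ ⟨j, rfl⟩
        simp only [SetLike.mem_coe, LinearMap.mem_ker, Lmap_eq_zero_iff]
        obtain ⟨a, ha⟩ | ⟨b, hb⟩ := j
        · interval_cases a
          · exact ⟨dXiter_zero κ, by simp [vfam], by simp [vfam], by simp [vfam], by simp [vfam]⟩
          · exact ⟨dXiter_zero κ, by simp [vfam], by simp [vfam], by simp [vfam], by simp [vfam]⟩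
          · refine ⟨dXiter_CX0X1 hκ _, ?_, ?_, ?_, ?_⟩
            · simp only [vfam]
              simp only [dX_C_mul, dU_C_mul, dX_X0X1, dX_X1, dX_X0sq, dX_X0, dX_C, dU_C,
                mul_zero, mul_one, dX_zero, dU_zero, sub_zero]
            · simp only [vfam]
              simp only [dX_C_mul, dU_C_mul, dX_X0X1, dX_X1, dU_X1, dX_X0sq, dX_X0, dX_C, dU_C,
                mul_zero, mul_one, dX_zero, dU_zero]
              rw [← map_mul, ← map_sub, show ((κ:ℝ) - 1) - ((κ:ℝ)-1)/2 * 2 = 0 by ring, map_zero]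
            · simp only [vfam]
              simp only [dX_C_mul, dU_C_mul, dU_X0X1, dU_X0, dX_X0sq, dX_X0, dX_C, dU_C,
                mul_zero, mul_one, dX_zero, dU_zero, sub_zero]
            · simp only [vfam]
              exact (onlyX_X0pow 2).dU_eq_zero
          · exact ⟨dXiter_X1 hκ, by simp [vfam], by simp [vfam], by simp [vfam], by simp [vfam]⟩
        · refine ⟨dXiter_X0pow hb, ?_, ?_, ?_, ?_⟩
          · simp [vfam, ((((onlyX_X0pow b).dX).dX).dU_eq_zero)]
          · simp [vfam, (((onlyX_X0pow b).dX).dU_eq_zero)]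
          · simp [vfam, ((onlyX_X0pow b).dU_eq_zero)]
          · simp [vfam]
    rw [hspan, finrank_span_eq_card (vfam_indep κ)]
    simp [Fintype.card_sum]
    omega
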